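/- Let S be a Haydon space (totally disconnected compact space whose clopen algebra has SCP). Let (μₙ) be nonnegative monotone additive functions on the topology τ(S) with μₙ(S)=1, and (νₙ) nonnegative additive functions on the clopen algebra 𝒰(S), such that for each m, n and every ε > 0 there is a clopen set A with μₘ(A) < ε and νₙ(S∖A) < ε. Then there exists an infinite set Λ ⊆ ℕ such that for each n ∈ ℕ and each ε > 0 there is a clopen set P which satisfies νₙ(P) < ε and μₘ(S∖P) < ε for all m ∈ Λ. -/

import Mathlib

open Filter Topology

section basics
variable {S : Type*} [TopologicalSpace S]

lemma fa_empty (f : Set S → ℝ)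
    (hadd : ∀ A B : Set S, IsClopen A → IsClopen B → Disjoint A B → f (A ∪ B) = f A + f B) :
    f ∅ = 0 := by
  have := hadd ∅ ∅ isClopen_empty isClopen_empty disjoint_bot_left
  simp at this; linarith

lemma fa_mono (f : Set S → ℝ)
    (hnn : ∀ A : Set S, IsClopen A → 0 ≤ f A)
    (hadd : ∀ A B : Set S, IsClopen A → IsClopen B → Disjoint A B → f (A ∪ B) = f A + f B)
    {A B : Set S} (hA : IsClopen A) (hB : IsClopen B) (hAB : A ⊆ B) : f A ≤ f B := by
  have h1 : f (A ∪ B \ A) = f A + f (B \ A) := hadd A (B \ A) hA (hB.diff hA) disjoint_sdiff_self_right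
  rw [Set.union_diff_cancel hAB] at h1
  have := hnn (B \ A) (hB.diff hA); linarith

lemma fa_subadd (f : Set S → ℝ)
    (hnn : ∀ A : Set S, IsClopen A → 0 ≤ f A)
    (hadd : ∀ A B : Set S, IsClopen A → IsClopen B → Disjoint A B → f (A ∪ B) = f A + f B)
    {A B : Set S} (hA : IsClopen A) (hB : IsClopen B) : f (A ∪ B) ≤ f A + f B := by
  have h1 : f (A ∪ B \ A) = f A + f (B \ A) := hadd A (B \ A) hA (hB.diff hA) disjoint_sdiff_self_right
  rw [Set.union_diff_self] at h1
  have := fa_mono f hnn hadd (hB.diff hA) hB Set.diff_subset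
  linarith

lemma fa_diff_lower (f : Set S → ℝ)
    (hnn : ∀ A : Set S, IsClopen A → 0 ≤ f A)
    (hadd : ∀ A B : Set S, IsClopen A → IsClopen B → Disjoint A B → f (A ∪ B) = f A + f B)
    {A Z : Set S} (hA : IsClopen A) (hZ : IsClopen Z) : f A - f Z ≤ f (A \ Z) := by
  have h1 : f (A \ Z ∪ A ∩ Z) = f (A \ Z) + f (A ∩ Z) := by
    refine hadd _ _ (hA.diff hZ) (hA.inter hZ) ?_
    exact Set.disjoint_left.mpr fun x hx hx2 => hx.2 hx2.2
  rw [Set.diff_union_inter] at h1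
  have := fa_mono f hnn hadd (hA.inter hZ) hZ Set.inter_subset_right
  linarith

lemma clopen_biUnion {ι : Type*} (T : Finset ι) (C : ι → Set S) (h : ∀ i ∈ T, IsClopen (C i)) :
    IsClopen (⋃ i ∈ T, C i) := by
  classical
  induction T using Finset.induction_on with
  | empty => simpa using isClopen_empty
  | @insert a s hnotmem ih =>
    rw [Finset.set_biUnion_insert]
    exact (h a (Finset.mem_insert_self a s)).union (ih fun i hi => h i (Finset.mem_insert_of_mem hi))

lemma fa_biUnion_le (f : Set S → ℝ)
    (hnn : ∀ A : Set S, IsClopen A → 0 ≤ f A)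
    (hadd : ∀ A B : Set S, IsClopen A → IsClopen B → Disjoint A B → f (A ∪ B) = f A + f B)
    {ι : Type*} (T : Finset ι) (C : ι → Set S) (h : ∀ i ∈ T, IsClopen (C i)) :
    f (⋃ i ∈ T, C i) ≤ ∑ i ∈ T, f (C i) := by
  classical
  induction T using Finset.induction_on with
  | empty => simp [fa_empty f hadd]
  | @insert a s hnotmem ih =>
    rw [Finset.set_biUnion_insert, Finset.sum_insert hnotmem]
    have h1 := fa_subadd f hnn hadd (h a (Finset.mem_insert_self a s))
      (clopen_biUnion s C fun i hi => h i (Finset.mem_insert_of_mem hi))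
    have h2 := ih fun i hi => h i (Finset.mem_insert_of_mem hi)
    linarith

lemma fa_sum_le_univ (f : Set S → ℝ)
    (hnn : ∀ A : Set S, IsClopen A → 0 ≤ f A)
    (hadd : ∀ A B : Set S, IsClopen A → IsClopen B → Disjoint A B → f (A ∪ B) = f A + f B)
    (T : ℕ) (D : ℕ → Set S) (h : ∀ t, IsClopen (D t))
    (hdis : Pairwise (Function.onFun Disjoint D)) :
    ∑ t ∈ Finset.range T, f (D t) ≤ f Set.univ := by
  have key : ∀ T : ℕ, f (⋃ t ∈ Finset.range T, D t) = ∑ t ∈ Finset.range T, f (D t) := by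
    intro T
    induction T with
    | zero => simp [fa_empty f hadd]
    | succ T ih =>
      rw [Finset.range_add_one, Finset.set_biUnion_insert, Finset.sum_insert (by simp),
        hadd _ _ (h T) (clopen_biUnion _ D fun i _ => h i) ?_, ih, add_comm]
      · exact Set.disjoint_left.mpr fun x hx hx2 => by
          obtain ⟨t, ht, hxt⟩ := Set.mem_iUnion₂.mp hx2
          exact Set.disjoint_left.mp (hdis (by simp at ht; omega : T ≠ t)) hx hxt
  rw [← key]
  exact fa_mono f hnn hadd (clopen_biUnion _ D fun i _ => h i) isClopen_univ (Set.subset_univ _)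

end basics

lemma core {S : Type*} [TopologicalSpace S]
    (hSCP : ∀ U : ℕ → Set S, (∀ n, IsClopen (U n)) →
      Pairwise (Function.onFun Disjoint U) →
      ∃ M : Set ℕ, M.Infinite ∧ IsOpen (closure (⋃ m ∈ M, U m)))
    (μ : ℕ → Set S → ℝ)
    (hμnn : ∀ m A, IsClopen A → 0 ≤ μ m A)
    (hμadd : ∀ m (A B : Set S), IsClopen A → IsClopen B → Disjoint A B →
      μ m (A ∪ B) = μ m A + μ m B)
    (hμone : ∀ m, μ m Set.univ = 1)
    (ν : Set S → ℝ)
    (hνnn : ∀ A : Set S, IsClopen A → 0 ≤ ν A)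
    (hνadd : ∀ (A B : Set S), IsClopen A → IsClopen B → Disjoint A B → ν (A ∪ B) = ν A + ν B)
    (hsep : ∀ m : ℕ, ∀ ε > (0:ℝ), ∃ C : Set S, IsClopen C ∧ ν C < ε ∧ 1 - ε < μ m C)
    (M : Set ℕ) (hM : M.Infinite) (δ : ℝ) (hδ : 0 < δ) :
    ∃ M' : Set ℕ, M' ⊆ M ∧ M'.Infinite ∧
      ∃ D : Set S, IsClopen D ∧ ν D < δ ∧ ∀ m ∈ M', 1 - δ < μ m D := by
  classical
  have μmono : ∀ m {A B : Set S}, IsClopen A → IsClopen B → A ⊆ B → μ m A ≤ μ m B :=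
    fun m _ _ hA hB h => fa_mono (μ m) (hμnn m) (hμadd m) hA hB h
  have μle1 : ∀ m {A : Set S}, IsClopen A → μ m A ≤ 1 := by
    intro m A hA
    have := μmono m hA isClopen_univ (Set.subset_univ A)
    rwa [hμone m] at this
  -- ultrafilter
  haveI hne : (Filter.cofinite ⊓ 𝓟 M).NeBot := by
    rw [inf_principal_neBot_iff]
    intro U hU
    obtain ⟨x, hx⟩ := (hM.diff (Filter.mem_cofinite.mp hU)).nonempty
    exact ⟨x, by simpa using hx.2, hx.1⟩
  set 𝒰 : Ultrafilter ℕ := Ultrafilter.of (Filter.cofinite ⊓ 𝓟 M) with h𝒰def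
  have hle : ↑𝒰 ≤ Filter.cofinite ⊓ 𝓟 M := Ultrafilter.of_le _
  have hlecof : ↑𝒰 ≤ (Filter.cofinite : Filter ℕ) := hle.trans inf_le_left
  have hM𝒰 : M ∈ 𝒰 := (hle.trans inf_le_right) (Filter.mem_principal_self M)
  have hinf : ∀ X : Set ℕ, X ∈ 𝒰 → X.Infinite := by
    intro X hX
    by_contra h
    rw [Set.not_infinite] at h
    have h2 : Xᶜ ∈ 𝒰 := hlecof h.compl_mem_cofinite
    have h3 : X ∩ Xᶜ ∈ 𝒰 := Filter.inter_mem hX h2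
    rw [Set.inter_compl_self] at h3
    simpa using h3
  -- ultrafilter limits
  have hex : ∀ X : Set S, ∃ L : ℝ, IsClopen X → Tendsto (fun m => μ m X) ↑𝒰 (𝓝 L) := by
    intro X
    by_cases h : IsClopen X
    · have hmap : ↑(𝒰.map (fun m => μ m X)) ≤ 𝓟 (Set.Icc (0:ℝ) 1) := by
        rw [Ultrafilter.coe_map, Filter.le_principal_iff, Filter.mem_map]
        exact Filter.univ_mem' fun m => ⟨hμnn m X h, μle1 m h⟩
      obtain ⟨L, _, hL⟩ := isCompact_Icc.ultrafilter_le_nhds (𝒰.map (fun m => μ m X)) hmap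
      rw [Ultrafilter.coe_map] at hL
      exact ⟨L, fun _ => hL⟩
    · exact ⟨0, fun h' => absurd h' h⟩
  choose lam hlam using hex
  have lam_le : ∀ {X Y : Set S}, IsClopen X → IsClopen Y → X ⊆ Y → lam X ≤ lam Y :=
    fun {X Y} hX hY h =>
      le_of_tendsto_of_tendsto' (hlam X hX) (hlam Y hY) (fun m => μmono m hX hY h)
  have lam_add : ∀ {X Y : Set S}, IsClopen X → IsClopen Y → Disjoint X Y →
      lam (X ∪ Y) = lam X + lam Y := by
    intro X Y hX hY hd
    refine tendsto_nhds_unique (hlam _ (hX.union hY)) ?_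
    exact ((hlam X hX).add (hlam Y hY)).congr (fun m => (hμadd m X Y hX hY hd).symm)
  have lam_empty : lam ∅ = 0 := by
    refine tendsto_nhds_unique (hlam ∅ isClopen_empty) ?_
    exact tendsto_const_nhds.congr (fun m => (fa_empty (μ m) (hμadd m)).symm)
  have lam_le_one : ∀ {X : Set S}, IsClopen X → lam X ≤ 1 :=
    fun {X} hX => le_of_tendsto' (hlam X hX) (fun m => μle1 m hX)
  -- the near-maximizer
  set ρ := δ/8 with hρdef
  have hρpos : 0 < ρ := by positivity
  set η := δ/8 with hηdef
  set A : Set ℝ := {x | ∃ V : Set S, IsClopen V ∧ ν V < η ∧ lam V = x} with hAdef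
  have hA0 : (0:ℝ) ∈ A := ⟨∅, isClopen_empty, by rw [fa_empty ν hνadd]; positivity, lam_empty⟩
  have hAbdd : BddAbove A := ⟨1, by rintro x ⟨V, hV, -, rfl⟩; exact lam_le_one hV⟩
  obtain ⟨x, hxA, hax⟩ := exists_lt_of_lt_csSup ⟨0, hA0⟩
    (show sSup A - ρ < sSup A by linarith)
  obtain ⟨V, hV, hVν, hVlam⟩ := hxA
  have hcρ : sSup A - ρ < lam V := by rw [hVlam]; exact hax
  set c := lam V with hcdef
  set β := (η - ν V)/2 with hβdef
  have hβpos : 0 < β := by rw [hβdef]; linarith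
  -- one construction step
  have step : ∀ (F : Finset ℕ) (U : Set S) (r : ℝ), IsClopen U → U ⊆ Vᶜ → 0 < r → ν U + r < β →
      ∃ p : ℕ × Set S, p.1 ∈ M ∧ p.1 ∉ F ∧ IsClopen p.2 ∧ p.2 ⊆ Uᶜ ∧ p.2 ⊆ Vᶜ ∧
        1 - c - 4*ρ < μ p.1 p.2 ∧ c - ρ < μ p.1 V ∧
        (IsClopen (U ∪ p.2) ∧ (U ∪ p.2) ⊆ Vᶜ ∧ 0 < r/2 ∧ ν (U ∪ p.2) + r/2 < β) := by
    intro F U r hU hUV hr hνU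
    have hdVU : Disjoint V U := Set.disjoint_left.mpr fun x hxV hxU => (hUV hxU) hxV
    have hνVU : ν (V ∪ U) < η := by
      have h1 := fa_subadd ν hνnn hνadd hV hU
      have h2 : ν V + β ≤ η := by rw [hβdef]; linarith
      linarith
    have h1 : lam (V ∪ U) ≤ sSup A := le_csSup hAbdd ⟨V ∪ U, hV.union hU, hνVU, rfl⟩
    have h2 : lam (V ∪ U) = c + lam U := lam_add hV hU hdVU
    have hlamU : lam U < ρ := by linarith
    have e1 : {m | μ m U < 2*ρ} ∈ 𝒰 := (hlam U hU).eventually_lt_const (by linarith)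
    have e2 : {m | c - ρ < μ m V} ∈ 𝒰 := (hlam V hV).eventually_const_lt (by linarith)
    have e3 : {m | μ m V < c + ρ} ∈ 𝒰 := (hlam V hV).eventually_lt_const (by linarith)
    have hGood := Filter.inter_mem (Filter.inter_mem (Filter.inter_mem hM𝒰 e1) e2) e3
    obtain ⟨m, hm⟩ := ((hinf _ hGood).diff (F.finite_toSet)).nonempty
    obtain ⟨⟨⟨⟨hmM, hmU⟩, hmV1⟩, hmV2⟩, hmF⟩ := hm
    have hε'pos : 0 < min ρ (r/2) := lt_min hρpos (by linarith)
    obtain ⟨C, hC, hCν, hCμ⟩ := hsep m (min ρ (r/2)) hε'pos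
    have hBsub : C \ (V ∪ U) ⊆ (V ∪ U)ᶜ := fun x hx => hx.2
    have hμVU : μ m (V ∪ U) ≤ μ m V + μ m U := fa_subadd (μ m) (hμnn m) (hμadd m) hV hU
    have hμB : 1 - c - 4*ρ < μ m (C \ (V ∪ U)) := by
      have hd := fa_diff_lower (μ m) (hμnn m) (hμadd m) hC (hV.union hU)
      have hmin : min ρ (r/2) ≤ ρ := min_le_left _ _
      have hmU' : μ m U < 2*ρ := hmU
      have hmV2' : μ m V < c + ρ := hmV2
      linarith
    have hνB : ν (C \ (V ∪ U)) < r/2 := by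
      have := fa_mono ν hνnn hνadd (hC.diff (hV.union hU)) hC Set.diff_subset
      have hmin : min ρ (r/2) ≤ r/2 := min_le_right _ _
      linarith
    refine ⟨⟨m, C \ (V ∪ U)⟩, hmM, hmF, hC.diff (hV.union hU),
      fun x hx => fun hxU => hx.2 (Set.mem_union_right _ hxU),
      fun x hx => fun hxV => hx.2 (Set.mem_union_left _ hxV),
      hμB, hmV1, hU.union (hC.diff (hV.union hU)),
      Set.union_subset hUV (fun x hx => fun hxV => hx.2 (Set.mem_union_left _ hxV)),
      by linarith, ?_⟩
    have := fa_subadd ν hνnn hνadd hU (hC.diff (hV.union hU))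
    linarith
  -- recursive construction
  let StInv : Finset ℕ × Set S × ℝ → Prop := fun p =>
    IsClopen p.2.1 ∧ p.2.1 ⊆ Vᶜ ∧ 0 < p.2.2 ∧ ν p.2.1 + p.2.2 < β
  have step' : ∀ q : {p : Finset ℕ × Set S × ℝ // StInv p}, ∃ pr : ℕ × Set S,
      pr.1 ∈ M ∧ pr.1 ∉ q.1.1 ∧ IsClopen pr.2 ∧ pr.2 ⊆ (q.1.2.1)ᶜ ∧ pr.2 ⊆ Vᶜ ∧
      1 - c - 4*ρ < μ pr.1 pr.2 ∧ c - ρ < μ pr.1 V ∧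
      StInv (insert pr.1 q.1.1, q.1.2.1 ∪ pr.2, q.1.2.2/2) := by
    rintro ⟨⟨F, U, r⟩, hU, hUV, hr, hν⟩
    obtain ⟨p, h1, h2, h3, h4, h5, h6, h7, h8, h9, h10, h11⟩ := step F U r hU hUV hr hν
    exact ⟨p, h1, h2, h3, h4, h5, h6, h7, h8, h9, h10, h11⟩
  choose pick hpick using step'
  have init : StInv (∅, (∅ : Set S), β/2) :=
    ⟨isClopen_empty, by simp, by positivity, by rw [fa_empty ν hνadd]; linarith⟩
  let nxt : {p : Finset ℕ × Set S × ℝ // StInv p} → {p : Finset ℕ × Set S × ℝ // StInv p} :=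
    fun q => ⟨(insert (pick q).1 q.1.1, q.1.2.1 ∪ (pick q).2, q.1.2.2/2),
      (hpick q).2.2.2.2.2.2.2⟩
  let st : ℕ → {p : Finset ℕ × Set S × ℝ // StInv p} :=
    fun k => Nat.rec ⟨(∅, (∅ : Set S), β/2), init⟩ (fun _ q => nxt q) k
  have hst : ∀ k, st (k+1) = nxt (st k) := fun k => rfl
  let msel : ℕ → ℕ := fun k => (pick (st k)).1
  let B : ℕ → Set S := fun k => (pick (st k)).2
  have hmselM : ∀ k, msel k ∈ M := fun k => (hpick (st k)).1
  have hmselF : ∀ k, msel k ∉ (st k).1.1 := fun k => (hpick (st k)).2.1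
  have hBcl : ∀ k, IsClopen (B k) := fun k => (hpick (st k)).2.2.1
  have hBU : ∀ k, B k ⊆ ((st k).1.2.1)ᶜ := fun k => (hpick (st k)).2.2.2.1
  have hBV : ∀ k, B k ⊆ Vᶜ := fun k => (hpick (st k)).2.2.2.2.1
  have hμB : ∀ k, 1 - c - 4*ρ < μ (msel k) (B k) := fun k => (hpick (st k)).2.2.2.2.2.1
  have hμV : ∀ k, c - ρ < μ (msel k) V := fun k => (hpick (st k)).2.2.2.2.2.2.1
  have hmem : ∀ k j, j < k → msel j ∈ (st k).1.1 ∧ B j ⊆ (st k).1.2.1 := by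
    intro k
    induction k with
    | zero => omega
    | succ k ih =>
      intro j hj
      have h1 : (st (k+1)).1.1 = insert (msel k) (st k).1.1 := by rw [hst k]
      have h2 : (st (k+1)).1.2.1 = (st k).1.2.1 ∪ B k := by rw [hst k]
      rcases Nat.lt_succ_iff_lt_or_eq.mp hj with h | h
      · obtain ⟨ha, hb⟩ := ih j h
        refine ⟨?_, ?_⟩
        · rw [h1]; exact Finset.mem_insert_of_mem ha
        · rw [h2]; exact hb.trans Set.subset_union_left
      · subst h
        refine ⟨?_, ?_⟩
        · rw [h1]; exact Finset.mem_insert_self _ _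
        · rw [h2]; exact Set.subset_union_right
  have hinj : Function.Injective msel := by
    intro j k hjk
    by_contra hne
    rcases Ne.lt_or_gt hne with h | h
    · exact hmselF k (hjk ▸ (hmem k j h).1)
    · exact hmselF j (hjk ▸ (hmem j k h).1)
  have hBdis : Pairwise (Function.onFun Disjoint B) := by
    have key : ∀ j k, j < k → Disjoint (B j) (B k) := by
      intro j k h
      have h1 : B j ⊆ (st k).1.2.1 := (hmem k j h).2
      exact Set.disjoint_left.mpr fun x hxj hxk => (hBU k hxk) (h1 hxj)
    intro j k hne
    rcases Ne.lt_or_gt hne with h | h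
    · exact key j k h
    · exact (key k j h).symm
  -- SCP applications
  have hscp' : ∀ t : ℕ, ∃ Mt : Set ℕ, Mt.Infinite ∧
      IsOpen (closure (⋃ j ∈ Mt, B (Nat.pair t j))) := by
    intro t
    refine hSCP (fun j => B (Nat.pair t j)) (fun j => hBcl _) ?_
    intro i j hij
    exact hBdis (fun h => hij (Nat.pair_eq_pair.mp h).2)
  choose Mt hMtInf hMtOp using hscp'
  set G : ℕ → Set S := fun t => closure (⋃ j ∈ Mt t, B (Nat.pair t j)) with hGdef
  have hGcl : ∀ t, IsClopen (G t) := fun t => ⟨isClosed_closure, hMtOp t⟩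
  have hGV : ∀ t, G t ⊆ Vᶜ := by
    intro t
    refine closure_minimal ?_ hV.compl.isClosed
    exact Set.iUnion₂_subset fun j _ => hBV _
  have hBG : ∀ t j, j ∈ Mt t → B (Nat.pair t j) ⊆ G t := by
    intro t j hj
    have h1 : B (Nat.pair t j) ⊆ ⋃ i ∈ Mt t, B (Nat.pair t i) :=
      Set.subset_biUnion_of_mem (u := fun i => B (Nat.pair t i)) hj
    exact h1.trans subset_closure
  have hBGdis : ∀ t s j, s ≠ t → Disjoint (B (Nat.pair t j)) (G s) := by
    intro t s j hst
    have hsub : (⋃ i ∈ Mt s, B (Nat.pair s i)) ⊆ (B (Nat.pair t j))ᶜ := by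
      refine Set.iUnion₂_subset fun i _ => ?_
      intro x hxi hxB
      have hne : Nat.pair s i ≠ Nat.pair t j := fun h => hst (Nat.pair_eq_pair.mp h).1
      exact Set.disjoint_left.mp (hBdis hne) hxi hxB
    have hc := closure_minimal hsub (hBcl (Nat.pair t j)).compl.isClosed
    exact Set.disjoint_left.mpr fun x hxB hxG => (hc hxG) hxB
  set D : ℕ → Set S := fun t => G t \ ⋃ s ∈ Finset.range t, G s with hDdef
  have hDcl : ∀ t, IsClopen (D t) := fun t =>
    (hGcl t).diff (clopen_biUnion _ _ fun s _ => hGcl s)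
  have hDG : ∀ t, D t ⊆ G t := fun t => Set.diff_subset
  have hDdis : Pairwise (Function.onFun Disjoint D) := by
    have key : ∀ s t, s < t → Disjoint (D s) (D t) := by
      intro s t h
      refine Set.disjoint_left.mpr fun x hxs hxt => ?_
      exact hxt.2 (Set.mem_biUnion (Finset.mem_range.mpr h) (hDG s hxs))
    intro s t hne
    rcases Ne.lt_or_gt hne with h | h
    · exact key s t h
    · exact (key t s h).symm
  have hBD : ∀ t j, j ∈ Mt t → B (Nat.pair t j) ⊆ D t := by
    intro t j hj x hx
    refine ⟨hBG t j hj hx, ?_⟩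
    intro hx2
    obtain ⟨s, hs, hxs⟩ := Set.mem_iUnion₂.mp hx2
    have : s ≠ t := by simp at hs; omega
    exact Set.disjoint_left.mp (hBGdis t s j this) hx hxs
  -- pigeonhole
  obtain ⟨T, hT⟩ := exists_nat_gt (ν Set.univ / (δ/2))
  have hex_t : ∃ t, ν (D t) < δ/2 := by
    by_contra h
    push_neg at h
    have h1 := fa_sum_le_univ ν hνnn hνadd T D hDcl hDdis
    have h2 : (T:ℝ) * (δ/2) ≤ ∑ t ∈ Finset.range T, ν (D t) := by
      calc (T:ℝ)*(δ/2) = ∑ _t ∈ Finset.range T, δ/2 := by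
            rw [Finset.sum_const, Finset.card_range, nsmul_eq_mul]
        _ ≤ _ := Finset.sum_le_sum fun t _ => h t
    have h3 := (div_lt_iff₀ (by positivity : (0:ℝ) < δ/2)).mp hT
    linarith
  obtain ⟨t₀, ht₀⟩ := hex_t
  -- conclusion
  refine ⟨(fun j => msel (Nat.pair t₀ j)) '' (Mt t₀), ?_, ?_, D t₀ ∪ V,
    (hDcl t₀).union hV, ?_, ?_⟩
  · rintro m ⟨j, hj, rfl⟩; exact hmselM _
  · refine (hMtInf t₀).image ?_
    intro i _ j _ h
    exact (Nat.pair_eq_pair.mp (hinj h)).2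
  · have := fa_subadd ν hνnn hνadd (hDcl t₀) hV
    have : ν (D t₀ ∪ V) ≤ ν (D t₀) + ν V := this
    rw [hηdef] at hVν
    linarith
  · rintro m ⟨j, hj, rfl⟩
    have h1 := hμB (Nat.pair t₀ j)
    have h2 := hμV (Nat.pair t₀ j)
    have hBDt : B (Nat.pair t₀ j) ⊆ D t₀ := hBD t₀ j hj
    have hdisj : Disjoint (D t₀) V :=
      Set.disjoint_left.mpr fun x hx hxV => (hGV t₀ (hDG t₀ hx)) hxV
    have hadd2 : μ (msel (Nat.pair t₀ j)) (D t₀ ∪ V)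
        = μ (msel (Nat.pair t₀ j)) (D t₀) + μ (msel (Nat.pair t₀ j)) V :=
      hμadd _ _ _ (hDcl t₀) hV hdisj
    have hmono2 : μ (msel (Nat.pair t₀ j)) (B (Nat.pair t₀ j)) ≤ μ (msel (Nat.pair t₀ j)) (D t₀) :=
      μmono _ (hBcl _) (hDcl t₀) hBDt
    rw [hρdef] at h1 h2
    linarith

/-- Inductive lemma: S a Haydon space, (μₙ) nonnegative monotone additive functions on the
topology with μₙ(S) = 1, (νₙ) nonnegative additive functions on the clopen algebra, such
that each pair μₘ, νₙ is 𝒰(S)-separated.  Then there is an infinite Λ ⊆ ℕ such that for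
each n and each ε > 0 some clopen P has νₙ(P) < ε and μₘ(S∖P) < ε for all m ∈ Λ. -/
theorem stmt11 {S : Type*} [TopologicalSpace S] [CompactSpace S] [T2Space S]
    [TotallyDisconnectedSpace S]
    (hSCP : ∀ U : ℕ → Set S, (∀ n, IsClopen (U n)) →
      Pairwise (Function.onFun Disjoint U) →
      ∃ M : Set ℕ, M.Infinite ∧ IsOpen (closure (⋃ m ∈ M, U m)))
    (μ ν : ℕ → Set S → ℝ)
    (hμ_nonneg : ∀ n A, IsOpen A → 0 ≤ μ n A)
    (hμ_mono : ∀ n (A B : Set S), IsOpen A → IsOpen B → A ⊆ B → μ n A ≤ μ n B)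
    (hμ_add : ∀ n (A B : Set S), IsOpen A → IsOpen B → Disjoint A B →
      μ n (A ∪ B) = μ n A + μ n B)
    (hμ_one : ∀ n, μ n Set.univ = 1)
    (hν_nonneg : ∀ n A, IsClopen A → 0 ≤ ν n A)
    (hν_add : ∀ n (A B : Set S), IsClopen A → IsClopen B → Disjoint A B →
      ν n (A ∪ B) = ν n A + ν n B)
    (hsep : ∀ m n, ∀ ε > (0 : ℝ), ∃ A : Set S, IsClopen A ∧
      μ m A < ε ∧ ν n Aᶜ < ε) :
    ∃ Λ : Set ℕ, Λ.Infinite ∧ ∀ n, ∀ ε > (0 : ℝ), ∃ P : Set S, IsClopen P ∧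
      ν n P < ε ∧ ∀ m ∈ Λ, μ m Pᶜ < ε := by
  classical
  have hμnn' : ∀ m (A : Set S), IsClopen A → 0 ≤ μ m A :=
    fun m A hA => hμ_nonneg m A hA.isOpen
  have hμadd' : ∀ m (A B : Set S), IsClopen A → IsClopen B → Disjoint A B →
      μ m (A ∪ B) = μ m A + μ m B :=
    fun m A B hA hB h => hμ_add m A B hA.isOpen hB.isOpen h
  have μcompl : ∀ m (A : Set S), IsClopen A → μ m Aᶜ = 1 - μ m A := by
    intro m A hA
    have := hμadd' m A Aᶜ hA hA.compl disjoint_compl_right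
    rw [Set.union_compl_self, hμ_one m] at this
    linarith
  have hsepC : ∀ m n, ∀ ε > (0:ℝ), ∃ C : Set S, IsClopen C ∧ ν n C < ε ∧ 1 - ε < μ m C := by
    intro m n ε hε
    obtain ⟨A, hA, h1, h2⟩ := hsep m n ε hε
    refine ⟨Aᶜ, hA.compl, h2, ?_⟩
    rw [μcompl m A hA]; linarith
  have hsepSum : ∀ (k m : ℕ), ∀ ε > (0:ℝ), ∃ C : Set S, IsClopen C ∧
      (∑ n ∈ Finset.range k, ν n C) < ε ∧ 1 - ε < μ m C := by
    intro k
    induction k with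
    | zero =>
      intro m ε hε
      exact ⟨Set.univ, isClopen_univ, by simpa using hε, by rw [hμ_one]; linarith⟩
    | succ k ih =>
      intro m ε hε
      obtain ⟨C1, hC1, hs1, hm1⟩ := ih m (ε/2) (by linarith)
      obtain ⟨C2, hC2, hs2, hm2⟩ := hsepC m k (ε/2) (by linarith)
      refine ⟨C1 ∩ C2, hC1.inter hC2, ?_, ?_⟩
      · rw [Finset.sum_range_succ]
        have ha : ∀ n, ν n (C1 ∩ C2) ≤ ν n C1 := fun n =>
          fa_mono (ν n) (hν_nonneg n) (hν_add n) (hC1.inter hC2) hC1 Set.inter_subset_left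
        have hb : ν k (C1 ∩ C2) ≤ ν k C2 :=
          fa_mono (ν k) (hν_nonneg k) (hν_add k) (hC1.inter hC2) hC2 Set.inter_subset_right
        have hc : ∑ n ∈ Finset.range k, ν n (C1 ∩ C2) ≤ ∑ n ∈ Finset.range k, ν n C1 :=
          Finset.sum_le_sum fun n _ => ha n
        linarith
      · have hd := fa_diff_lower (μ m) (hμnn' m) (hμadd' m) hC1 hC2.compl
        rw [Set.diff_compl, μcompl m C2 hC2] at hd
        linarith
  -- core instantiated with finite sums of ν
  have coreInst : ∀ (M : Set ℕ), M.Infinite → ∀ (k : ℕ) (δ : ℝ), 0 < δ →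
      ∃ M' : Set ℕ, M' ⊆ M ∧ M'.Infinite ∧ ∃ D : Set S, IsClopen D ∧
        (∑ n ∈ Finset.range k, ν n D) < δ ∧ ∀ m ∈ M', 1 - δ < μ m D := by
    intro M hM k δ hδ
    refine core hSCP μ hμnn' hμadd' hμ_one (fun A => ∑ n ∈ Finset.range k, ν n A)
      ?_ ?_ (fun m => hsepSum k m) M hM δ hδ
    · intro A hA; exact Finset.sum_nonneg fun n _ => hν_nonneg n A hA
    · intro A B hA hB h
      rw [← Finset.sum_add_distrib]
      exact Finset.sum_congr rfl fun n _ => hν_add n A B hA hB h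
  -- nested chain
  have step2 : ∀ (q : {M : Set ℕ // M.Infinite}) (k : ℕ),
      ∃ (q' : {M : Set ℕ // M.Infinite}) (D : Set S),
      q'.1 ⊆ q.1 ∧ IsClopen D ∧ (∑ n ∈ Finset.range (k+1), ν n D) < (1/2)^k ∧
      ∀ m ∈ q'.1, 1 - (1/2)^k < μ m D := by
    intro q k
    obtain ⟨M', hsub, hinf, D, hD, h1, h2⟩ := coreInst q.1 q.2 (k+1) ((1/2)^k) (by positivity)
    exact ⟨⟨M', hinf⟩, D, hsub, hD, h1, h2⟩
  choose F FD hFsub hFD hFν hFμ using step2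
  let MS : ℕ → {M : Set ℕ // M.Infinite} :=
    fun k => Nat.rec ⟨Set.univ, Set.infinite_univ⟩ (fun k q => F q k) k
  have hMS : ∀ k, MS (k+1) = F (MS k) k := fun _ => rfl
  let DD : ℕ → Set S := fun k => FD (MS k) k
  have hDDcl : ∀ k, IsClopen (DD k) := fun k => hFD (MS k) k
  have hDDν : ∀ k, (∑ n ∈ Finset.range (k+1), ν n (DD k)) < (1/2)^k := fun k => hFν (MS k) k
  have hDDμ : ∀ k, ∀ m ∈ (MS (k+1)).1, 1 - (1/2:ℝ)^k < μ m (DD k) := by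
    intro k m hm
    rw [hMS k] at hm
    exact hFμ (MS k) k m hm
  have hMSmono : ∀ j k, k ≤ j → (MS j).1 ⊆ (MS k).1 := by
    intro j
    induction j with
    | zero => intro k hk; rw [Nat.le_zero.mp hk]
    | succ j ih =>
      intro k hk
      rcases Nat.lt_succ_iff_lt_or_eq.mp (Nat.lt_succ_of_le hk) with h | h
      · have h1 : (MS (j+1)).1 ⊆ (MS j).1 := by rw [hMS j]; exact hFsub (MS j) j
        exact h1.trans (ih k (by omega))
      · rw [h]
  -- diagonal sequence
  have hdiag : ∀ (j x : ℕ), ∃ y ∈ (MS j).1, x < y := fun j x => (MS j).2.exists_gt x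
  choose gnext hgmem hggt using hdiag
  let lamseq : ℕ → ℕ := fun j => Nat.rec (gnext 0 0) (fun j y => gnext (j+1) y) j
  have hlamS : ∀ j, lamseq (j+1) = gnext (j+1) (lamseq j) := fun _ => rfl
  have hlamMem : ∀ j, lamseq j ∈ (MS j).1 := by
    intro j
    cases j with
    | zero => exact hgmem 0 0
    | succ j => exact hgmem (j+1) (lamseq j)
  have hlamMono : StrictMono lamseq :=
    strictMono_nat_of_lt_succ (fun j => hggt (j+1) (lamseq j))
  refine ⟨Set.range lamseq, Set.infinite_range_of_injective hlamMono.injective, ?_⟩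
  intro n ε hε
  obtain ⟨K, hK⟩ := exists_pow_lt_of_lt_one (show (0:ℝ) < ε/2 by linarith)
    (show (1:ℝ)/2 < 1 by norm_num)
  set k := max n K with hkdef
  have hk1 : ((1:ℝ)/2)^k ≤ (1/2)^K :=
    pow_le_pow_of_le_one (by norm_num) (by norm_num) (le_max_right n K)
  have hkn : n ≤ k := le_max_left n K
  have hkpos : (0:ℝ) < 2*((k:ℝ)+1) := by positivity
  have hfix : ∀ j : ℕ, ∃ C : Set S, IsClopen C ∧ ν n C < ε/(2*((k:ℝ)+1)) ∧
      1 - ε < μ (lamseq j) C := by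
    intro j
    obtain ⟨C, h1, h2, h3⟩ := hsepC (lamseq j) n (min (ε/(2*((k:ℝ)+1))) ε)
      (lt_min (by positivity) hε)
    refine ⟨C, h1, lt_of_lt_of_le h2 (min_le_left _ _), ?_⟩
    have := min_le_right (ε/(2*((k:ℝ)+1))) ε
    linarith
  choose CF hCF1 hCF2 hCF3 using hfix
  set P := DD k ∪ ⋃ j ∈ Finset.range (k+1), CF j with hPdef
  have hUcl : IsClopen (⋃ j ∈ Finset.range (k+1), CF j) :=
    clopen_biUnion _ _ fun j _ => hCF1 j
  have hPclopen : IsClopen P := (hDDcl k).union hUcl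
  refine ⟨P, hPclopen, ?_, ?_⟩
  · -- ν n P < ε
    have h1 : ν n P ≤ ν n (DD k) + ν n (⋃ j ∈ Finset.range (k+1), CF j) :=
      fa_subadd (ν n) (hν_nonneg n) (hν_add n) (hDDcl k) hUcl
    have h2 : ν n (⋃ j ∈ Finset.range (k+1), CF j) ≤ ∑ j ∈ Finset.range (k+1), ν n (CF j) :=
      fa_biUnion_le (ν n) (hν_nonneg n) (hν_add n) _ _ fun j _ => hCF1 j
    have h3 : ∑ j ∈ Finset.range (k+1), ν n (CF j)
        < ∑ _j ∈ Finset.range (k+1), ε/(2*((k:ℝ)+1)) :=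
      Finset.sum_lt_sum_of_nonempty (by simp) (fun j _ => hCF2 j)
    have h4 : ∑ _j ∈ Finset.range (k+1), ε/(2*((k:ℝ)+1)) = ε/2 := by
      rw [Finset.sum_const, Finset.card_range, nsmul_eq_mul]
      have hne : ((k:ℝ)+1) ≠ 0 := by positivity
      push_cast
      field_simp
    have h5 : ν n (DD k) ≤ ∑ n' ∈ Finset.range (k+1), ν n' (DD k) :=
      Finset.single_le_sum (fun i _ => hν_nonneg i (DD k) (hDDcl k))
        (Finset.mem_range.mpr (by omega))
    have h6 := hDDν k
    linarith
  · rintro m ⟨j, rfl⟩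
    have hμP : μ (lamseq j) Pᶜ = 1 - μ (lamseq j) P := μcompl _ _ hPclopen
    rcases le_or_gt j k with h | h
    · have hsub : CF j ⊆ P := by
        refine Set.Subset.trans ?_ Set.subset_union_right
        exact Set.subset_biUnion_of_mem (u := fun j => CF j) (Finset.mem_range.mpr (by omega))
      have hmono := fa_mono (μ (lamseq j)) (hμnn' (lamseq j)) (hμadd' (lamseq j))
        (hCF1 j) hPclopen hsub
      rw [hμP]
      linarith [hCF3 j]
    · have hmem2 : lamseq j ∈ (MS (k+1)).1 := hMSmono j (k+1) h (hlamMem j)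
      have hb := hDDμ k (lamseq j) hmem2
      have hmono := fa_mono (μ (lamseq j)) (hμnn' (lamseq j)) (hμadd' (lamseq j))
        (hDDcl k) hPclopen Set.subset_union_left
      rw [hμP]
      linarith
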